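/- For each s ∈ [K], let p_s > 0 with ∑_s p_s = 1, α_s ∈ (0,1], ᾱ = ∑_s p_s α_s, and η(s) ∈ [0,1]. Define H(λ, γ) := ∑_{s=1}^K (1/(2α_s)) · ( |(α_s p_s/ᾱ)(1 − 2η(s)) + γ_s| − p_s α_s/ᾱ − 2α_s λ_s − γ_s )_+ + ∑_s λ_s α_s for (λ, γ) ∈ ℝᴷ × ℝᴷ. If ∑_s γ_s = 0, then H(λ, γ) ≥ ‖γ‖₁/2 − 1, where ‖γ‖₁ = ∑_s |γ_s|. -/
import Mathlib

lemma per_term_bound (a lam M : ℝ) (ha : 0 < a) (ha1 : a ≤ 1) :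
    (1 / (2 * a)) * max (M - 2 * a * lam) 0 + lam * a ≥ M / 2 := by
  rcases le_or_gt (M - 2 * a * lam) 0 with h | h
  · rw [max_eq_right h]
    nlinarith
  · rw [max_eq_left h.le]
    have h1 : (1 / (2 * a)) * (M - 2 * a * lam) = (M - 2 * a * lam) / (2 * a) := by
      ring
    have h2 : (M - 2 * a * lam) / 2 ≤ (M - 2 * a * lam) / (2 * a) := by
      apply div_le_div_of_nonneg_left h.le (by linarith) (by linarith)
    have h3 : (M - 2 * a * lam) / 2 = M / 2 - a * lam := by ring
    nlinarith

theorem dual_coercivity_in_gamma (K : ℕ) (p α η : Fin K → ℝ)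
    (hp : ∀ s, 0 < p s) (hpsum : ∑ s, p s = 1)
    (hα : ∀ s, α s ∈ Set.Ioc (0 : ℝ) 1)
    (hη : ∀ s, η s ∈ Set.Icc (0 : ℝ) 1)
    (ᾱ : ℝ) (hᾱ : ᾱ = ∑ s, p s * α s)
    (l γ : Fin K → ℝ) (hγ : ∑ s, γ s = 0) :
    (∑ s, (1 / (2 * α s)) *
        max (|(α s * p s / ᾱ) * (1 - 2 * η s) + γ s|
          - p s * α s / ᾱ - 2 * α s * l s - γ s) 0)
      + ∑ s, l s * α s
      ≥ (∑ s, |γ s|) / 2 - 1 := by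
  rcases Nat.eq_zero_or_pos K with hK | hK
  · subst hK
    simp
  · have hne : (Finset.univ : Finset (Fin K)).Nonempty := by
      simpa [Finset.univ_nonempty_iff] using Fin.pos_iff_nonempty.mp hK
    have hᾱpos : 0 < ᾱ := by
      rw [hᾱ]
      exact Finset.sum_pos (fun s _ => mul_pos (hp s) (hα s).1) hne
    have key : ∀ s, (1 / (2 * α s)) *
        max (|(α s * p s / ᾱ) * (1 - 2 * η s) + γ s|
          - p s * α s / ᾱ - 2 * α s * l s - γ s) 0 + l s * α s
        ≥ (|γ s| - 2 * (p s * α s / ᾱ) - γ s) / 2 := by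
      intro s
      set a := p s * α s / ᾱ with ha_def
      have hapos : 0 < a := div_pos (mul_pos (hp s) (hα s).1) hᾱpos
      have hc : |(α s * p s / ᾱ) * (1 - 2 * η s)| ≤ a := by
        rw [abs_mul]
        have h1 : |α s * p s / ᾱ| = a := by
          rw [abs_of_pos]
          · rw [mul_comm]
          · exact div_pos (mul_pos (hα s).1 (hp s)) hᾱpos
        have h2 : |1 - 2 * η s| ≤ 1 := by
          rw [abs_le]
          constructor <;> [linarith [(hη s).2]; linarith [(hη s).1]]
        calc |α s * p s / ᾱ| * |1 - 2 * η s| ≤ a * 1 := by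
              rw [h1]; exact mul_le_mul_of_nonneg_left h2 hapos.le
          _ = a := by ring
      have habs : |(α s * p s / ᾱ) * (1 - 2 * η s) + γ s| ≥ |γ s| - a := by
        have := abs_sub_abs_le_abs_sub (γ s) (-((α s * p s / ᾱ) * (1 - 2 * η s)))
        simp only [sub_neg_eq_add, abs_neg] at this
        have h' : |γ s| - |(α s * p s / ᾱ) * (1 - 2 * η s)|
            ≤ |γ s + (α s * p s / ᾱ) * (1 - 2 * η s)| := this
        rw [add_comm] at h'
        linarith
      have hM := per_term_bound (α s) (l s)
        (|(α s * p s / ᾱ) * (1 - 2 * η s) + γ s| - a - γ s) (hα s).1 (hα s).2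
      have heq : |(α s * p s / ᾱ) * (1 - 2 * η s) + γ s| - a - γ s - 2 * α s * l s
          = |(α s * p s / ᾱ) * (1 - 2 * η s) + γ s|
            - p s * α s / ᾱ - 2 * α s * l s - γ s := by ring
      rw [heq] at hM
      have hmono : (|γ s| - 2 * a - γ s) / 2
          ≤ (|(α s * p s / ᾱ) * (1 - 2 * η s) + γ s| - a - γ s) / 2 := by
        linarith
      linarith
  -- sum up
    have hsum : ∑ s, ((1 / (2 * α s)) *
        max (|(α s * p s / ᾱ) * (1 - 2 * η s) + γ s|
          - p s * α s / ᾱ - 2 * α s * l s - γ s) 0 + l s * α s)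
        ≥ ∑ s, (|γ s| - 2 * (p s * α s / ᾱ) - γ s) / 2 :=
      Finset.sum_le_sum (fun s _ => key s)
    rw [Finset.sum_add_distrib] at hsum
    have hasum : ∑ s, p s * α s / ᾱ = 1 := by
      rw [← Finset.sum_div, ← hᾱ, div_self hᾱpos.ne']
    have hrhs : ∑ s, (|γ s| - 2 * (p s * α s / ᾱ) - γ s) / 2
        = (∑ s, |γ s|) / 2 - 1 := by
      have he : ∀ s : Fin K, (|γ s| - 2 * (p s * α s / ᾱ) - γ s) / 2
          = |γ s| / 2 - p s * α s / ᾱ - γ s / 2 := fun s => by ring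
      simp_rw [he]
      rw [Finset.sum_sub_distrib, Finset.sum_sub_distrib, ← Finset.sum_div,
        ← Finset.sum_div, ← Finset.sum_div, ← hᾱ, div_self hᾱpos.ne', hγ]
      ring
    linarith [hsum, hrhs.ge, hrhs.le]
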